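/- Let W_0, Y^N, Y_1^N and auxiliary variables be finite random variables, and define U_1 = Y_1^{J-1} and U = (Y^{J-1}, W_0, Z_{J+1}^N, J) with J uniform on {1,...,N} and independent of (W_0, Y^N, Y_1^N, Z^N). Then (1/N)·I(W_0 ; Y^N, Y_1^N) ≤ I(U ; Y_J, Y_{1,J} | U_1). -/

import Mathlib

open Finset Real

namespace RBC

variable {Ω : Type*} [Fintype Ω]

/-- Probability that a random variable `X` takes value `a`, under pmf `p` on `Ω`. -/
noncomputable def prob {α : Type*} [DecidableEq α] (p : Ω → ℝ) (X : Ω → α) (a : α) : ℝ :=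
  ∑ ω ∈ Finset.univ.filter (fun ω => X ω = a), p ω

/-- Shannon entropy of a random variable with values in a finite type. -/
noncomputable def ent {α : Type*} [Fintype α] [DecidableEq α] (p : Ω → ℝ) (X : Ω → α) : ℝ :=
  -∑ a : α, prob p X a * Real.log (prob p X a)

/-- Conditional entropy H(X|Y). -/
noncomputable def condEnt {α β : Type*} [Fintype α] [DecidableEq α] [Fintype β] [DecidableEq β]
    (p : Ω → ℝ) (X : Ω → α) (Y : Ω → β) : ℝ :=
  ent p (fun ω => (X ω, Y ω)) - ent p Y

/-- Mutual information I(X;Y). -/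
noncomputable def mi {α β : Type*} [Fintype α] [DecidableEq α] [Fintype β] [DecidableEq β]
    (p : Ω → ℝ) (X : Ω → α) (Y : Ω → β) : ℝ :=
  ent p X + ent p Y - ent p (fun ω => (X ω, Y ω))

/-- Conditional mutual information I(X;Y|Z). -/
noncomputable def cmi {α β γ : Type*} [Fintype α] [DecidableEq α] [Fintype β] [DecidableEq β]
    [Fintype γ] [DecidableEq γ] (p : Ω → ℝ) (X : Ω → α) (Y : Ω → β) (Z : Ω → γ) : ℝ :=
  ent p (fun ω => (X ω, Z ω)) + ent p (fun ω => (Y ω, Z ω))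
    - ent p (fun ω => (X ω, Y ω, Z ω)) - ent p Z

/-- Independence of two random variables. -/
def Indep {α β : Type*} [DecidableEq α] [DecidableEq β]
    (p : Ω → ℝ) (X : Ω → α) (Y : Ω → β) : Prop :=
  ∀ a b, prob p (fun ω => (X ω, Y ω)) (a, b) = prob p X a * prob p Y b

/-- The prefix vector `(X 0, ..., X (i-1))` (0-based time), i.e. `X^{i-1}` in 1-based notation. -/
def pre {α : Type*} (X : ℕ → Ω → α) (i : ℕ) : Ω → (Fin i → α) :=
  fun ω j => X j ω

/-- The suffix vector `(X i, ..., X (N-1))` (0-based time), i.e. `X_{i+1}^{N}` in 1-based notation. -/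
def suf {α : Type*} (X : ℕ → Ω → α) (i N : ℕ) : Ω → (Fin (N - i) → α) :=
  fun ω j => X (i + j) ω

lemma prob_eq_sum_ite {α : Type*} [DecidableEq α] (p : Ω → ℝ) (X : Ω → α) (a : α) :
    prob p X a = ∑ ω, if X ω = a then p ω else 0 := by
  rw [prob, Finset.sum_filter]

lemma prob_nonneg {α : Type*} [DecidableEq α] (p : Ω → ℝ) (hp : ∀ ω, 0 ≤ p ω)
    (X : Ω → α) (a : α) : 0 ≤ prob p X a :=
  Finset.sum_nonneg fun ω _ => hp ω

lemma sum_prob {α : Type*} [Fintype α] [DecidableEq α] (p : Ω → ℝ) (X : Ω → α) :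
    ∑ a, prob p X a = ∑ ω, p ω := by
  simp only [prob_eq_sum_ite]
  rw [Finset.sum_comm]
  simp

lemma prob_comp {α β : Type*} [Fintype α] [DecidableEq α] [DecidableEq β]
    (p : Ω → ℝ) (g : α → β) (X : Ω → α) (b : β) :
    prob p (fun ω => g (X ω)) b = ∑ a ∈ Finset.univ.filter (fun a => g a = b), prob p X a := by
  simp only [prob_eq_sum_ite, Finset.sum_filter]
  have step : ∀ a : α, (if g a = b then ∑ ω, if X ω = a then p ω else 0 else 0)
      = ∑ ω, if X ω = a then (if g a = b then p ω else 0) else 0 := by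
    intro a; by_cases h : g a = b <;> simp [h]
  rw [Finset.sum_congr rfl fun a _ => step a, Finset.sum_comm]
  refine Finset.sum_congr rfl fun ω _ => ?_
  rw [Finset.sum_ite_eq Finset.univ (X ω) (fun a => if g a = b then p ω else 0)]
  simp

lemma prob_congr {α : Type*} [DecidableEq α] (p : Ω → ℝ) (X X' : Ω → α)
    (h : ∀ ω, p ω ≠ 0 → X ω = X' ω) (a : α) : prob p X a = prob p X' a := by
  simp only [prob_eq_sum_ite]
  refine Finset.sum_congr rfl fun ω _ => ?_
  by_cases hq : p ω = 0
  · simp [hq]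
  · rw [h ω hq]

lemma ent_comp_inj {α β : Type*} [Fintype α] [DecidableEq α] [Fintype β] [DecidableEq β]
    (p : Ω → ℝ) (g : α → β) (hg : Function.Injective g) (X : Ω → α) :
    ent p (fun ω => g (X ω)) = ent p X := by
  unfold ent
  congr 1
  have hz : ∀ b ∈ Finset.univ, b ∉ Finset.univ.image g →
      prob p (fun ω => g (X ω)) b * Real.log (prob p (fun ω => g (X ω)) b) = 0 := by
    intro b _ hb
    have : prob p (fun ω => g (X ω)) b = 0 := by
      rw [prob]
      refine Finset.sum_eq_zero fun ω hω => ?_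
      simp only [Finset.mem_filter] at hω
      exact absurd (hω.2 ▸ Finset.mem_image_of_mem g (Finset.mem_univ (X ω))) hb
    simp [this]
  rw [← Finset.sum_subset (Finset.subset_univ _) hz,
    Finset.sum_image (fun a _ a' _ h => hg h)]
  refine Finset.sum_congr rfl fun a _ => ?_
  have : prob p (fun ω => g (X ω)) (g a) = prob p X a := by
    rw [prob, prob]
    congr 1
    ext ω
    simp [hg.eq_iff]
  rw [this]

lemma ent_congr {α : Type*} [Fintype α] [DecidableEq α] (p : Ω → ℝ) (X X' : Ω → α)
    (h : ∀ ω, p ω ≠ 0 → X ω = X' ω) : ent p X = ent p X' := by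
  unfold ent
  congr 1
  exact Finset.sum_congr rfl fun a _ => by rw [prob_congr p X X' h]

lemma ent_measure_congr {α : Type*} [Fintype α] [DecidableEq α] (p q : Ω → ℝ) (X X' : Ω → α)
    (h : ∀ a, prob p X a = prob q X' a) : ent p X = ent q X' := by
  unfold ent
  congr 1
  exact Finset.sum_congr rfl fun a _ => by rw [h]

lemma ent_biDet {α β : Type*} [Fintype α] [DecidableEq α] [Fintype β] [DecidableEq β]
    (p : Ω → ℝ) (X : Ω → α) (X' : Ω → β) (f : α → β) (g : β → α)
    (hf : ∀ ω, X' ω = f (X ω)) (hg : ∀ ω, X ω = g (X' ω)) :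
    ent p X = ent p X' := by
  have e1 : (fun ω => (X ω, X' ω)) = (fun ω => (fun a : α => (a, f a)) (X ω)) := by
    funext ω; rw [hf ω]
  have e2 : (fun ω => (X' ω, X ω)) = (fun ω => (fun b : β => (b, g b)) (X' ω)) := by
    funext ω; rw [hg ω]
  have i1 : Function.Injective (fun a : α => (a, f a)) := fun a a' h => congrArg Prod.fst h
  have i2 : Function.Injective (fun b : β => (b, g b)) := fun b b' h => congrArg Prod.fst h
  have h1 := ent_comp_inj p _ i1 X
  have h2 := ent_comp_inj p _ i2 X'
  have h3 := ent_comp_inj p Prod.swap Prod.swap_injective (fun ω => (X ω, X' ω))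
  rw [← e1] at h1
  rw [← e2] at h2
  have e3 : (fun ω => Prod.swap (X ω, X' ω)) = (fun ω => (X' ω, X ω)) := rfl
  rw [e3] at h3
  rw [← h1, ← h3]
  exact h2

lemma ent_const {α : Type*} [Fintype α] [DecidableEq α] (p : Ω → ℝ) (hsum : ∑ ω, p ω = 1)
    (c : α) : ent p (fun _ => c) = 0 := by
  unfold ent
  rw [neg_eq_zero]
  refine Finset.sum_eq_zero fun a _ => ?_
  by_cases h : c = a
  · have : prob p (fun _ => c) a = 1 := by
      rw [prob_eq_sum_ite]; simp [h, hsum]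
    simp [this]
  · have : prob p (fun _ => c) a = 0 := by
      rw [prob_eq_sum_ite]; simp [h]
    simp [this]

section
variable {α β γ : Type*} [Fintype α] [Fintype β] [Fintype γ]

lemma sum_marg_mul (f : α → γ → ℝ) (g : γ → ℝ) :
    ∑ c, (∑ a, f a c) * g c = ∑ a, ∑ c, f a c * g c := by
  calc ∑ c, (∑ a, f a c) * g c = ∑ c, ∑ a, f a c * g c :=
        Finset.sum_congr rfl fun c _ => Finset.sum_mul _ _ _
    _ = ∑ a, ∑ c, f a c * g c := Finset.sum_comm

lemma sum_comm3 (f : α → β → γ → ℝ) :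
    ∑ a, ∑ b, ∑ c, f a b c = ∑ c, ∑ a, ∑ b, f a b c :=
  calc ∑ a, ∑ b, ∑ c, f a b c = ∑ a, ∑ c, ∑ b, f a b c :=
        Finset.sum_congr rfl fun a _ => Finset.sum_comm
    _ = ∑ c, ∑ a, ∑ b, f a b c := Finset.sum_comm

lemma core_ineq (r : α × β × γ → ℝ) (hr0 : ∀ v, 0 ≤ r v) (hr1 : ∑ v, r v = 1) :
    (∑ ac : α × γ, (∑ b, r (ac.1, b, ac.2)) * Real.log (∑ b, r (ac.1, b, ac.2)))
      + (∑ bc : β × γ, (∑ a, r (a, bc.1, bc.2)) * Real.log (∑ a, r (a, bc.1, bc.2)))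
    ≤ (∑ v, r v * Real.log (r v))
      + (∑ c : γ, (∑ ab : α × β, r (ab.1, ab.2, c)) * Real.log (∑ ab : α × β, r (ab.1, ab.2, c))) := by
  classical
  -- marginal abbreviations (kept as plain lambdas; equalities by rfl)
  have hm1nn : ∀ a c, (0:ℝ) ≤ ∑ b, r (a, b, c) := fun a c =>
    Finset.sum_nonneg fun b _ => hr0 _
  have hm2nn : ∀ b c, (0:ℝ) ≤ ∑ a, r (a, b, c) := fun b c =>
    Finset.sum_nonneg fun a _ => hr0 _
  have hm3nn : ∀ c, (0:ℝ) ≤ ∑ a, ∑ b, r (a, b, c) := fun c =>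
    Finset.sum_nonneg fun a _ => hm1nn a c
  have hd1 : ∀ a b c, r (a, b, c) ≤ ∑ b, r (a, b, c) := fun a b c =>
    Finset.single_le_sum (fun b _ => hr0 (a, b, c)) (Finset.mem_univ b)
  have hd2 : ∀ a b c, r (a, b, c) ≤ ∑ a, r (a, b, c) := fun a b c =>
    Finset.single_le_sum (fun a _ => hr0 (a, b, c)) (Finset.mem_univ a)
  have hd3 : ∀ a b c, r (a, b, c) ≤ ∑ a, ∑ b, r (a, b, c) := fun a b c =>
    le_trans (hd1 a b c)
      (Finset.single_le_sum (fun a _ => hm1nn a c) (Finset.mem_univ a))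
  have hr1' : ∑ a, ∑ b, ∑ c, r (a, b, c) = 1 := by
    rw [← hr1]; simp [Fintype.sum_prod_type]
  -- rewrite the three marginal-entropy sums as sums over the full product
  have hE1 : (∑ ac : α × γ, (∑ b, r (ac.1, b, ac.2)) * Real.log (∑ b, r (ac.1, b, ac.2)))
      = ∑ a, ∑ b, ∑ c, r (a, b, c) * Real.log (∑ b', r (a, b', c)) := by
    rw [Fintype.sum_prod_type]
    exact Finset.sum_congr rfl fun a _ =>
      sum_marg_mul (fun b c => r (a, b, c)) (fun c => Real.log (∑ b', r (a, b', c)))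
  have hE2 : (∑ bc : β × γ, (∑ a, r (a, bc.1, bc.2)) * Real.log (∑ a, r (a, bc.1, bc.2)))
      = ∑ a, ∑ b, ∑ c, r (a, b, c) * Real.log (∑ a', r (a', b, c)) := by
    rw [Fintype.sum_prod_type]
    calc ∑ b, ∑ c, (∑ a, r (a, b, c)) * Real.log (∑ a, r (a, b, c))
        = ∑ b, ∑ a, ∑ c, r (a, b, c) * Real.log (∑ a', r (a', b, c)) :=
          Finset.sum_congr rfl fun b _ =>
            sum_marg_mul (fun a c => r (a, b, c)) (fun c => Real.log (∑ a', r (a', b, c)))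
      _ = ∑ a, ∑ b, ∑ c, r (a, b, c) * Real.log (∑ a', r (a', b, c)) := Finset.sum_comm
  have hE3 : (∑ c : γ, (∑ ab : α × β, r (ab.1, ab.2, c)) * Real.log (∑ ab : α × β, r (ab.1, ab.2, c)))
      = ∑ a, ∑ b, ∑ c, r (a, b, c) * Real.log (∑ a', ∑ b', r (a', b', c)) := by
    have e : ∀ c : γ, (∑ ab : α × β, r (ab.1, ab.2, c)) = ∑ a, ∑ b, r (a, b, c) := fun c => by
      rw [Fintype.sum_prod_type]
    calc ∑ c : γ, (∑ ab : α × β, r (ab.1, ab.2, c)) * Real.log (∑ ab : α × β, r (ab.1, ab.2, c))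
        = ∑ c, (∑ a, ∑ b, r (a, b, c)) * Real.log (∑ a', ∑ b', r (a', b', c)) := by
          refine Finset.sum_congr rfl fun c _ => ?_
          rw [e c]
      _ = ∑ a, ∑ c, (∑ b, r (a, b, c)) * Real.log (∑ a', ∑ b', r (a', b', c)) :=
          sum_marg_mul (fun a c => ∑ b, r (a, b, c)) _
      _ = ∑ a, ∑ b, ∑ c, r (a, b, c) * Real.log (∑ a', ∑ b', r (a', b', c)) :=
          Finset.sum_congr rfl fun a _ =>
            sum_marg_mul (fun b c => r (a, b, c)) _
  have hE0 : (∑ v, r v * Real.log (r v)) = ∑ a, ∑ b, ∑ c, r (a, b, c) * Real.log (r (a, b, c)) := by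
    simp [Fintype.sum_prod_type]
  rw [hE1, hE2, hE3, hE0]
  -- now everything over triples; flatten to a single product sum
  have flat : ∀ F : α → β → γ → ℝ, (∑ a, ∑ b, ∑ c, F a b c) = ∑ v : α × β × γ, F v.1 v.2.1 v.2.2 := by
    intro F; simp [Fintype.sum_prod_type]
  rw [flat, flat, flat, flat, ← sub_nonneg]
  have combine : (∑ v : α × β × γ, r (v.1, v.2.1, v.2.2) * Real.log (r (v.1, v.2.1, v.2.2)))
      + (∑ v : α × β × γ, r (v.1, v.2.1, v.2.2) * Real.log (∑ a', ∑ b', r (a', b', v.2.2)))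
      - ((∑ v : α × β × γ, r (v.1, v.2.1, v.2.2) * Real.log (∑ b', r (v.1, b', v.2.2)))
        + ∑ v : α × β × γ, r (v.1, v.2.1, v.2.2) * Real.log (∑ a', r (a', v.2.1, v.2.2)))
      = ∑ v : α × β × γ, (r (v.1, v.2.1, v.2.2) * Real.log (r (v.1, v.2.1, v.2.2))
          + r (v.1, v.2.1, v.2.2) * Real.log (∑ a', ∑ b', r (a', b', v.2.2))
          - r (v.1, v.2.1, v.2.2) * Real.log (∑ b', r (v.1, b', v.2.2))
          - r (v.1, v.2.1, v.2.2) * Real.log (∑ a', r (a', v.2.1, v.2.2))) := by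
    rw [← Finset.sum_add_distrib, sub_add_eq_sub_sub, ← Finset.sum_sub_distrib,
      ← Finset.sum_sub_distrib]
  rw [combine]
  -- pointwise bound: each summand ≥ r v - m1 m2 / m3  (when r v ≠ 0), else = 0
  set G : α × β × γ → ℝ := fun v =>
    r (v.1, v.2.1, v.2.2) * Real.log (r (v.1, v.2.1, v.2.2))
      + r (v.1, v.2.1, v.2.2) * Real.log (∑ a', ∑ b', r (a', b', v.2.2))
      - r (v.1, v.2.1, v.2.2) * Real.log (∑ b', r (v.1, b', v.2.2))
      - r (v.1, v.2.1, v.2.2) * Real.log (∑ a', r (a', v.2.1, v.2.2)) with hG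
  set H : α × β × γ → ℝ := fun v =>
    if (∑ a', ∑ b', r (a', b', v.2.2)) = 0 then 0 else
      (∑ b', r (v.1, b', v.2.2)) * (∑ a', r (a', v.2.1, v.2.2)) / (∑ a', ∑ b', r (a', b', v.2.2))
    with hH
  have hHnn : ∀ v, 0 ≤ H v := by
    intro v; rw [hH]; dsimp only
    split
    · exact le_refl 0
    · exact div_nonneg (mul_nonneg (hm1nn _ _) (hm2nn _ _)) (hm3nn _)
  have pointwise : ∀ v : α × β × γ, r (v.1, v.2.1, v.2.2) - H v ≤ G v := by
    rintro ⟨a, b, c⟩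
    by_cases hz : r (a, b, c) = 0
    · rw [hG]; dsimp only
      rw [hz]
      simp [hHnn ⟨a, b, c⟩]
    · have hrv : 0 < r (a, b, c) := lt_of_le_of_ne (hr0 _) (Ne.symm hz)
      have h1 : 0 < ∑ b', r (a, b', c) := lt_of_lt_of_le hrv (hd1 a b c)
      have h2 : 0 < ∑ a', r (a', b, c) := lt_of_lt_of_le hrv (hd2 a b c)
      have h3 : 0 < ∑ a', ∑ b', r (a', b', c) := lt_of_lt_of_le hrv (hd3 a b c)
      have hHv : H (a, b, c)
          = (∑ b', r (a, b', c)) * (∑ a', r (a', b, c)) / (∑ a', ∑ b', r (a', b', c)) := by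
        rw [hH]; dsimp only
        rw [if_neg (ne_of_gt h3)]
      have hratio : (0:ℝ) < (∑ b', r (a, b', c)) * (∑ a', r (a', b, c))
          / ((∑ a', ∑ b', r (a', b', c)) * r (a, b, c)) := by positivity
      have hlog := Real.log_le_sub_one_of_pos hratio
      have hexpand : Real.log ((∑ b', r (a, b', c)) * (∑ a', r (a', b, c))
            / ((∑ a', ∑ b', r (a', b', c)) * r (a, b, c)))
          = Real.log (∑ b', r (a, b', c)) + Real.log (∑ a', r (a', b, c))
            - Real.log (∑ a', ∑ b', r (a', b', c)) - Real.log (r (a, b, c)) := by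
        rw [Real.log_div (by positivity) (by positivity), Real.log_mul (ne_of_gt h1) (ne_of_gt h2),
          Real.log_mul (ne_of_gt h3) (ne_of_gt hrv)]
        ring
      rw [hexpand] at hlog
      have hmul := mul_le_mul_of_nonneg_left hlog (le_of_lt hrv)
      -- hmul : r * (log m1 + log m2 - log m3 - log r) ≤ r * (ratio - 1)
      have hrhs : r (a, b, c) * ((∑ b', r (a, b', c)) * (∑ a', r (a', b, c))
            / ((∑ a', ∑ b', r (a', b', c)) * r (a, b, c)) - 1)
          = H (a, b, c) - r (a, b, c) := by
        rw [hHv]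
        field_simp
      rw [hrhs] at hmul
      rw [hG]; dsimp only
      nlinarith [hmul]
  calc (0:ℝ) = 1 - 1 := by ring
    _ ≤ (∑ v : α × β × γ, r (v.1, v.2.1, v.2.2)) - ∑ v, H v := by
        have e1 : (∑ v : α × β × γ, r (v.1, v.2.1, v.2.2)) = 1 := by
          rw [← hr1]
        have e2 : ∑ v, H v ≤ 1 := by
          have step1 : ∑ v, H v = ∑ c, ∑ a, ∑ b, H (a, b, c) := by
            rw [← sum_comm3 (fun a b c => H (a, b, c)), flat (fun a b c => H (a, b, c))]
          have step2 : ∀ c, (∑ a, ∑ b, H (a, b, c))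
              = if (∑ a', ∑ b', r (a', b', c)) = 0 then 0 else ∑ a', ∑ b', r (a', b', c) := by
            intro c
            by_cases h : (∑ a', ∑ b', r (a', b', c)) = 0
            · rw [if_pos h]
              refine Finset.sum_eq_zero fun a _ => Finset.sum_eq_zero fun b _ => ?_
              rw [hH]; dsimp only; rw [if_pos h]
            · rw [if_neg h]
              have hH' : ∀ a b, H (a, b, c) = (∑ b', r (a, b', c)) * (∑ a', r (a', b, c))
                  / (∑ a', ∑ b', r (a', b', c)) := by
                intro a b; rw [hH]; dsimp only; rw [if_neg h]
              have hcomm : (∑ b, ∑ a', r (a', b, c)) = ∑ a', ∑ b', r (a', b', c) :=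
                Finset.sum_comm
              calc ∑ a, ∑ b, H (a, b, c)
                  = ∑ a, ∑ b, (∑ b', r (a, b', c)) * (∑ a', r (a', b, c))
                      / (∑ a', ∑ b', r (a', b', c)) :=
                    Finset.sum_congr rfl fun a _ => Finset.sum_congr rfl fun b _ => hH' a b
                _ = ∑ a, (∑ b', r (a, b', c)) * (∑ b, ∑ a', r (a', b, c))
                      / (∑ a', ∑ b', r (a', b', c)) := by
                    refine Finset.sum_congr rfl fun a _ => ?_
                    rw [← Finset.sum_div, ← Finset.mul_sum]
                _ = ∑ a, (∑ b', r (a, b', c)) := by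
                    refine Finset.sum_congr rfl fun a _ => ?_
                    rw [hcomm, mul_div_cancel_right₀ _ h]
                _ = ∑ a', ∑ b', r (a', b', c) := rfl
          rw [step1, Finset.sum_congr rfl fun c _ => step2 c]
          have hle : (∑ c : γ, if (∑ a', ∑ b', r (a', b', c)) = 0 then 0
              else ∑ a', ∑ b', r (a', b', c)) ≤ ∑ c, ∑ a', ∑ b', r (a', b', c) := by
            refine Finset.sum_le_sum fun c _ => ?_
            split
            · exact hm3nn c
            · exact le_refl _
          have hone : (∑ c, ∑ a', ∑ b', r (a', b', c)) = 1 := by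
            rw [← sum_comm3 (fun a b c => r (a, b, c))]; exact hr1'
          linarith
        linarith
    _ = ∑ v : α × β × γ, (r (v.1, v.2.1, v.2.2) - H v) := by
        rw [Finset.sum_sub_distrib]
    _ ≤ ∑ v, G v := Finset.sum_le_sum fun v _ => pointwise v

end

lemma prob_marg1 {α β γ : Type*} [Fintype α] [DecidableEq α] [Fintype β] [DecidableEq β]
    [Fintype γ] [DecidableEq γ] (p : Ω → ℝ) (X : Ω → α) (Y : Ω → β) (Z : Ω → γ)
    (a : α) (c : γ) :
    prob p (fun ω => (X ω, Z ω)) (a, c)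
      = ∑ b, prob p (fun ω => (X ω, Y ω, Z ω)) (a, b, c) := by
  simp only [prob_eq_sum_ite]
  rw [Finset.sum_comm]
  refine Finset.sum_congr rfl fun ω _ => ?_
  by_cases h1 : X ω = a <;> by_cases h2 : Z ω = c <;>
    simp [Prod.ext_iff, h1, h2]

lemma prob_marg2 {α β γ : Type*} [Fintype α] [DecidableEq α] [Fintype β] [DecidableEq β]
    [Fintype γ] [DecidableEq γ] (p : Ω → ℝ) (X : Ω → α) (Y : Ω → β) (Z : Ω → γ)
    (b : β) (c : γ) :
    prob p (fun ω => (Y ω, Z ω)) (b, c)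
      = ∑ a, prob p (fun ω => (X ω, Y ω, Z ω)) (a, b, c) := by
  simp only [prob_eq_sum_ite]
  rw [Finset.sum_comm]
  refine Finset.sum_congr rfl fun ω _ => ?_
  by_cases h1 : Y ω = b <;> by_cases h2 : Z ω = c <;>
    simp [Prod.ext_iff, h1, h2]

lemma prob_marg3 {α β γ : Type*} [Fintype α] [DecidableEq α] [Fintype β] [DecidableEq β]
    [Fintype γ] [DecidableEq γ] (p : Ω → ℝ) (X : Ω → α) (Y : Ω → β) (Z : Ω → γ)
    (c : γ) :
    prob p Z c = ∑ ab : α × β, prob p (fun ω => (X ω, Y ω, Z ω)) (ab.1, ab.2, c) := by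
  simp only [prob_eq_sum_ite]
  rw [Finset.sum_comm]
  refine Finset.sum_congr rfl fun ω _ => ?_
  by_cases h : Z ω = c <;>
    simp [Fintype.sum_prod_type, Prod.ext_iff, h, ite_and, Finset.sum_ite_eq]

lemma cmi_nonneg {α β γ : Type*} [Fintype α] [DecidableEq α] [Fintype β] [DecidableEq β]
    [Fintype γ] [DecidableEq γ] (p : Ω → ℝ) (hp : ∀ ω, 0 ≤ p ω) (hsum : ∑ ω, p ω = 1)
    (X : Ω → α) (Y : Ω → β) (Z : Ω → γ) : 0 ≤ cmi p X Y Z := by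
  classical
  set r : α × β × γ → ℝ := fun v => prob p (fun ω => (X ω, Y ω, Z ω)) v with hr
  have hr0 : ∀ v, 0 ≤ r v := fun v => prob_nonneg p hp _ v
  have hr1 : ∑ v, r v = 1 := by rw [hr]; rw [sum_prob, hsum]
  have e1 : ent p (fun ω => (X ω, Z ω))
      = -∑ ac : α × γ, (∑ b, r (ac.1, b, ac.2)) * Real.log (∑ b, r (ac.1, b, ac.2)) := by
    unfold ent
    congr 1
    refine Finset.sum_congr rfl fun ac _ => ?_
    have := prob_marg1 p X Y Z ac.1 ac.2
    rw [show ((ac.1, ac.2) : α × γ) = ac from rfl] at this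
    rw [this]
  have e2 : ent p (fun ω => (Y ω, Z ω))
      = -∑ bc : β × γ, (∑ a, r (a, bc.1, bc.2)) * Real.log (∑ a, r (a, bc.1, bc.2)) := by
    unfold ent
    congr 1
    refine Finset.sum_congr rfl fun bc _ => ?_
    have := prob_marg2 p X Y Z bc.1 bc.2
    rw [show ((bc.1, bc.2) : β × γ) = bc from rfl] at this
    rw [this]
  have e4 : ent p Z
      = -∑ c : γ, (∑ ab : α × β, r (ab.1, ab.2, c)) * Real.log (∑ ab : α × β, r (ab.1, ab.2, c)) := by
    unfold ent
    congr 1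
    refine Finset.sum_congr rfl fun c _ => ?_
    rw [prob_marg3 p X Y Z c]
  have e3 : ent p (fun ω => (X ω, Y ω, Z ω)) = -∑ v, r v * Real.log (r v) := rfl
  unfold cmi
  rw [e1, e2, e3, e4]
  have := core_ineq r hr0 hr1
  linarith

lemma cmi_biDet {α α' β β' γ γ' : Type*}
    [Fintype α] [DecidableEq α] [Fintype α'] [DecidableEq α']
    [Fintype β] [DecidableEq β] [Fintype β'] [DecidableEq β']
    [Fintype γ] [DecidableEq γ] [Fintype γ'] [DecidableEq γ']
    (p : Ω → ℝ) (X : Ω → α) (X' : Ω → α') (Y : Ω → β) (Y' : Ω → β')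
    (Z : Ω → γ) (Z' : Ω → γ')
    (fX : α → α') (gX : α' → α) (hfX : ∀ ω, X' ω = fX (X ω)) (hgX : ∀ ω, X ω = gX (X' ω))
    (fY : β → β') (gY : β' → β) (hfY : ∀ ω, Y' ω = fY (Y ω)) (hgY : ∀ ω, Y ω = gY (Y' ω))
    (fZ : γ → γ') (gZ : γ' → γ) (hfZ : ∀ ω, Z' ω = fZ (Z ω)) (hgZ : ∀ ω, Z ω = gZ (Z' ω)) :
    cmi p X Y Z = cmi p X' Y' Z' := by
  have h1 : ent p (fun ω => (X ω, Z ω)) = ent p (fun ω => (X' ω, Z' ω)) :=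
    ent_biDet p _ _ (fun v => (fX v.1, fZ v.2)) (fun v => (gX v.1, gZ v.2))
      (fun ω => by rw [hfX ω, hfZ ω]) (fun ω => by rw [hgX ω, hgZ ω])
  have h2 : ent p (fun ω => (Y ω, Z ω)) = ent p (fun ω => (Y' ω, Z' ω)) :=
    ent_biDet p _ _ (fun v => (fY v.1, fZ v.2)) (fun v => (gY v.1, gZ v.2))
      (fun ω => by rw [hfY ω, hfZ ω]) (fun ω => by rw [hgY ω, hgZ ω])
  have h3 : ent p (fun ω => (X ω, Y ω, Z ω)) = ent p (fun ω => (X' ω, Y' ω, Z' ω)) :=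
    ent_biDet p _ _ (fun v => (fX v.1, fY v.2.1, fZ v.2.2)) (fun v => (gX v.1, gY v.2.1, gZ v.2.2))
      (fun ω => by rw [hfX ω, hfY ω, hfZ ω]) (fun ω => by rw [hgX ω, hgY ω, hgZ ω])
  have h4 : ent p Z = ent p Z' := ent_biDet p Z Z' fZ gZ hfZ hgZ
  unfold cmi
  rw [h1, h2, h3, h4]

lemma cmi_congr {α β γ : Type*} [Fintype α] [DecidableEq α] [Fintype β] [DecidableEq β]
    [Fintype γ] [DecidableEq γ] (p : Ω → ℝ) (X X' : Ω → α) (Y Y' : Ω → β) (Z Z' : Ω → γ)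
    (hX : ∀ ω, p ω ≠ 0 → X ω = X' ω) (hY : ∀ ω, p ω ≠ 0 → Y ω = Y' ω)
    (hZ : ∀ ω, p ω ≠ 0 → Z ω = Z' ω) : cmi p X Y Z = cmi p X' Y' Z' := by
  unfold cmi
  rw [ent_congr p (fun ω => (X ω, Z ω)) (fun ω => (X' ω, Z' ω))
        (fun ω h => by show (X ω, Z ω) = (X' ω, Z' ω); rw [hX ω h, hZ ω h]),
      ent_congr p (fun ω => (Y ω, Z ω)) (fun ω => (Y' ω, Z' ω))
        (fun ω h => by show (Y ω, Z ω) = (Y' ω, Z' ω); rw [hY ω h, hZ ω h]),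
      ent_congr p (fun ω => (X ω, Y ω, Z ω)) (fun ω => (X' ω, Y' ω, Z' ω))
        (fun ω h => by show (X ω, Y ω, Z ω) = (X' ω, Y' ω, Z' ω); rw [hX ω h, hY ω h, hZ ω h]),
      ent_congr p Z Z' hZ]

lemma cmi_prob_congr {α β γ : Type*} [Fintype α] [DecidableEq α] [Fintype β] [DecidableEq β]
    [Fintype γ] [DecidableEq γ] (p q : Ω → ℝ) (X : Ω → α) (Y : Ω → β) (Z : Ω → γ)
    (h1 : ∀ v, prob p (fun ω => (X ω, Z ω)) v = prob q (fun ω => (X ω, Z ω)) v)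
    (h2 : ∀ v, prob p (fun ω => (Y ω, Z ω)) v = prob q (fun ω => (Y ω, Z ω)) v)
    (h3 : ∀ v, prob p (fun ω => (X ω, Y ω, Z ω)) v = prob q (fun ω => (X ω, Y ω, Z ω)) v)
    (h4 : ∀ v, prob p Z v = prob q Z v) : cmi p X Y Z = cmi q X Y Z := by
  unfold cmi
  rw [ent_measure_congr p q _ _ h1, ent_measure_congr p q _ _ h2,
    ent_measure_congr p q _ _ h3, ent_measure_congr p q _ _ h4]

lemma cmi_chain {α β γ δ : Type*} [Fintype α] [DecidableEq α] [Fintype β] [DecidableEq β]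
    [Fintype γ] [DecidableEq γ] [Fintype δ] [DecidableEq δ]
    (p : Ω → ℝ) (A : Ω → α) (B : Ω → β) (C : Ω → γ) (D : Ω → δ) :
    cmi p (fun ω => (A ω, C ω)) B D = cmi p C B D + cmi p A B (fun ω => (C ω, D ω)) := by
  have h1 : ent p (fun ω => ((A ω, C ω), D ω)) = ent p (fun ω => (A ω, (C ω, D ω))) :=
    ent_biDet p _ _ (fun v => (v.1.1, (v.1.2, v.2))) (fun v => ((v.1, v.2.1), v.2.2))
      (fun ω => rfl) (fun ω => rfl)
  have h2 : ent p (fun ω => ((A ω, C ω), B ω, D ω)) = ent p (fun ω => (A ω, B ω, C ω, D ω)) :=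
    ent_biDet p _ _ (fun v => (v.1.1, (v.2.1, (v.1.2, v.2.2))))
      (fun v => ((v.1, v.2.2.1), (v.2.1, v.2.2.2))) (fun ω => rfl) (fun ω => rfl)
  have h3 : ent p (fun ω => (C ω, B ω, D ω)) = ent p (fun ω => (B ω, C ω, D ω)) :=
    ent_biDet p _ _ (fun v => (v.2.1, (v.1, v.2.2))) (fun v => (v.2.1, (v.1, v.2.2)))
      (fun ω => rfl) (fun ω => rfl)
  simp only [cmi]
  rw [h1, h2, h3]
  ring

lemma ent_pair_decomp {α : Type*} [Fintype α] [DecidableEq α] {N : ℕ} (hN : (N : ℝ) ≠ 0)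
    (p : Ω → ℝ) (J : Ω → Fin N) (hJ : ∀ j, prob p J j = 1 / N) (X : Ω → α) :
    ent p (fun ω => (X ω, J ω)) = ent p J
      + ∑ j, (1 / N : ℝ) * ent (fun ω => if J ω = j then (N : ℝ) * p ω else 0) X := by
  classical
  have key : ∀ (a : α) (j : Fin N),
      prob (fun ω => if J ω = j then (N : ℝ) * p ω else 0) X a
        = (N : ℝ) * prob p (fun ω => (X ω, J ω)) (a, j) := by
    intro a j
    simp only [prob_eq_sum_ite, Finset.mul_sum]
    refine Finset.sum_congr rfl fun ω _ => ?_
    by_cases hx : X ω = a <;> by_cases hj : J ω = j <;> simp [Prod.ext_iff, hx, hj]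
  have key2 : ∀ (a : α) (j : Fin N),
      prob p (fun ω => (X ω, J ω)) (a, j)
        = (1 / N : ℝ) * prob (fun ω => if J ω = j then (N : ℝ) * p ω else 0) X a := by
    intro a j
    rw [key a j]
    field_simp
  have qsum : ∀ j : Fin N,
      ∑ a, prob (fun ω => if J ω = j then (N : ℝ) * p ω else 0) X a = 1 := by
    intro j
    rw [sum_prob]
    have : ∑ ω, (if J ω = j then (N : ℝ) * p ω else 0) = (N : ℝ) * prob p J j := by
      rw [prob_eq_sum_ite, Finset.mul_sum]
      refine Finset.sum_congr rfl fun ω _ => ?_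
      by_cases hj : J ω = j <;> simp [hj]
    rw [this, hJ j]
    field_simp
  have entJ : ent p J = -∑ j : Fin N, (1 / N : ℝ) * Real.log (1 / N) := by
    unfold ent
    congr 1
    exact Finset.sum_congr rfl fun j _ => by rw [hJ j]
  have main : ent p (fun ω => (X ω, J ω))
      = -∑ j : Fin N, ((1 / N : ℝ)
          * (∑ a, prob (fun ω => if J ω = j then (N : ℝ) * p ω else 0) X a
              * Real.log (prob (fun ω => if J ω = j then (N : ℝ) * p ω else 0) X a))
        + (1 / N : ℝ) * Real.log (1 / N)) := by
    unfold ent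
    congr 1
    rw [Fintype.sum_prod_type, Finset.sum_comm]
    refine Finset.sum_congr rfl fun j _ => ?_
    have perA : ∀ a, prob p (fun ω => (X ω, J ω)) (a, j)
          * Real.log (prob p (fun ω => (X ω, J ω)) (a, j))
        = (1 / N : ℝ) * (prob (fun ω => if J ω = j then (N : ℝ) * p ω else 0) X a
            * Real.log (prob (fun ω => if J ω = j then (N : ℝ) * p ω else 0) X a))
          + (1 / N : ℝ) * Real.log (1 / N)
            * prob (fun ω => if J ω = j then (N : ℝ) * p ω else 0) X a := by
      intro a
      rw [key2 a j]
      by_cases hq : prob (fun ω => if J ω = j then (N : ℝ) * p ω else 0) X a = 0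
      · simp [hq]
      · rw [Real.log_mul (by positivity) hq]
        ring
    rw [Finset.sum_congr rfl fun a _ => perA a, Finset.sum_add_distrib, ← Finset.mul_sum,
      ← Finset.mul_sum, qsum j]
    ring
  rw [main, entJ]
  have ej : ∀ j : Fin N, (1 / N : ℝ) * ent (fun ω => if J ω = j then (N : ℝ) * p ω else 0) X
      = -((1 / N : ℝ) * ∑ a, prob (fun ω => if J ω = j then (N : ℝ) * p ω else 0) X a
          * Real.log (prob (fun ω => if J ω = j then (N : ℝ) * p ω else 0) X a)) := by
    intro j; unfold ent; ring
  rw [Finset.sum_congr rfl fun j _ => ej j, Finset.sum_add_distrib, Finset.sum_neg_distrib]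
  ring

lemma cmi_cond_decomp {α β γ : Type*} [Fintype α] [DecidableEq α] [Fintype β] [DecidableEq β]
    [Fintype γ] [DecidableEq γ] {N : ℕ} (hN : (N : ℝ) ≠ 0)
    (p : Ω → ℝ) (J : Ω → Fin N) (hJ : ∀ j, prob p J j = 1 / N)
    (X : Ω → α) (Y : Ω → β) (Z : Ω → γ) :
    cmi p X Y (fun ω => (Z ω, J ω))
      = ∑ j, (1 / N : ℝ) * cmi (fun ω => if J ω = j then (N : ℝ) * p ω else 0) X Y Z := by
  classical
  have d1 : ent p (fun ω => (X ω, Z ω, J ω)) = ent p J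
      + ∑ j, (1 / N : ℝ) * ent (fun ω => if J ω = j then (N : ℝ) * p ω else 0)
          (fun ω => (X ω, Z ω)) := by
    rw [show ent p (fun ω => (X ω, Z ω, J ω))
        = ent p (fun ω => ((X ω, Z ω), J ω)) from
      ent_biDet p _ _ (fun v => ((v.1, v.2.1), v.2.2)) (fun v => (v.1.1, (v.1.2, v.2)))
        (fun ω => rfl) (fun ω => rfl)]
    exact ent_pair_decomp hN p J hJ _
  have d2 : ent p (fun ω => (Y ω, Z ω, J ω)) = ent p J
      + ∑ j, (1 / N : ℝ) * ent (fun ω => if J ω = j then (N : ℝ) * p ω else 0)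
          (fun ω => (Y ω, Z ω)) := by
    rw [show ent p (fun ω => (Y ω, Z ω, J ω))
        = ent p (fun ω => ((Y ω, Z ω), J ω)) from
      ent_biDet p _ _ (fun v => ((v.1, v.2.1), v.2.2)) (fun v => (v.1.1, (v.1.2, v.2)))
        (fun ω => rfl) (fun ω => rfl)]
    exact ent_pair_decomp hN p J hJ _
  have d3 : ent p (fun ω => (X ω, Y ω, Z ω, J ω)) = ent p J
      + ∑ j, (1 / N : ℝ) * ent (fun ω => if J ω = j then (N : ℝ) * p ω else 0)
          (fun ω => (X ω, Y ω, Z ω)) := by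
    rw [show ent p (fun ω => (X ω, Y ω, Z ω, J ω))
        = ent p (fun ω => ((X ω, Y ω, Z ω), J ω)) from
      ent_biDet p _ _ (fun v => ((v.1, v.2.1, v.2.2.1), v.2.2.2))
        (fun v => (v.1.1, v.1.2.1, v.1.2.2, v.2)) (fun ω => rfl) (fun ω => rfl)]
    exact ent_pair_decomp hN p J hJ _
  have d4 : ent p (fun ω => (Z ω, J ω)) = ent p J
      + ∑ j, (1 / N : ℝ) * ent (fun ω => if J ω = j then (N : ℝ) * p ω else 0) Z :=
    ent_pair_decomp hN p J hJ Z
  have expand : ∑ j, (1 / N : ℝ) * cmi (fun ω => if J ω = j then (N : ℝ) * p ω else 0) X Y Z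
      = (∑ j, (1 / N : ℝ) * ent (fun ω => if J ω = j then (N : ℝ) * p ω else 0)
            (fun ω => (X ω, Z ω)))
        + (∑ j, (1 / N : ℝ) * ent (fun ω => if J ω = j then (N : ℝ) * p ω else 0)
            (fun ω => (Y ω, Z ω)))
        - (∑ j, (1 / N : ℝ) * ent (fun ω => if J ω = j then (N : ℝ) * p ω else 0)
            (fun ω => (X ω, Y ω, Z ω)))
        - (∑ j, (1 / N : ℝ) * ent (fun ω => if J ω = j then (N : ℝ) * p ω else 0) Z) := by
    rw [← Finset.sum_add_distrib, ← Finset.sum_sub_distrib, ← Finset.sum_sub_distrib]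
    exact Finset.sum_congr rfl fun j _ => by simp only [cmi]; ring
  rw [expand]
  simp only [cmi]
  rw [d1, d2, d3, d4]
  ring

lemma prob_cond_of_indep {𝒱 α : Type*} [Fintype 𝒱] [DecidableEq 𝒱] [DecidableEq α]
    {N : ℕ} (hN : (N : ℝ) ≠ 0) (p : Ω → ℝ) (J : Ω → Fin N) (V : Ω → 𝒱)
    (hJ : ∀ j, prob p J j = 1 / N) (hind : Indep p J V) (j : Fin N)
    (X : Ω → α) (f : 𝒱 → α) (hX : ∀ ω, X ω = f (V ω)) (a : α) :
    prob (fun ω => if J ω = j then (N : ℝ) * p ω else 0) X a = prob p X a := by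
  classical
  have h1 : prob (fun ω => if J ω = j then (N : ℝ) * p ω else 0) X a
      = (N : ℝ) * ∑ ω, (if J ω = j ∧ f (V ω) = a then p ω else 0) := by
    rw [prob_eq_sum_ite, Finset.mul_sum]
    refine Finset.sum_congr rfl fun ω _ => ?_
    by_cases h1 : J ω = j <;> by_cases h2 : f (V ω) = a <;> simp [hX ω, h1, h2]
  have h2 : ∀ v : 𝒱, prob p (fun ω => (J ω, V ω)) (j, v)
      = ∑ ω, (if J ω = j ∧ V ω = v then p ω else 0) := by
    intro v
    rw [prob_eq_sum_ite]
    exact Finset.sum_congr rfl fun ω _ => by simp [Prod.ext_iff]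
  have h3 : ∑ v ∈ Finset.univ.filter (fun v => f v = a), prob p (fun ω => (J ω, V ω)) (j, v)
      = ∑ ω, (if J ω = j ∧ f (V ω) = a then p ω else 0) := by
    rw [Finset.sum_filter]
    have push : ∀ v, (if f v = a then prob p (fun ω => (J ω, V ω)) (j, v) else 0)
        = ∑ ω, (if f v = a ∧ J ω = j ∧ V ω = v then p ω else 0) := by
      intro v
      by_cases h : f v = a <;> simp [h, h2 v]
    rw [Finset.sum_congr rfl fun v _ => push v, Finset.sum_comm]
    refine Finset.sum_congr rfl fun ω _ => ?_
    have reshape : ∀ v, (if f v = a ∧ J ω = j ∧ V ω = v then p ω else 0)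
        = (if V ω = v then (if f v = a ∧ J ω = j then p ω else 0) else 0) := by
      intro v
      by_cases hv : V ω = v <;> by_cases hr : f v = a ∧ J ω = j <;> simp [hv, hr] <;> tauto
    rw [Finset.sum_congr rfl fun v _ => reshape v,
      Finset.sum_ite_eq Finset.univ (V ω) (fun v => if f v = a ∧ J ω = j then p ω else 0)]
    by_cases hj : J ω = j <;> by_cases hf : f (V ω) = a <;> simp [hj, hf]
  have h4 : ∑ v ∈ Finset.univ.filter (fun v => f v = a), prob p (fun ω => (J ω, V ω)) (j, v)
      = (1 / N : ℝ) * prob p X a := by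
    have e : ∀ v, prob p (fun ω => (J ω, V ω)) (j, v) = (1 / N : ℝ) * prob p V v := by
      intro v
      rw [hind j v, hJ j]
    rw [Finset.sum_congr rfl fun v _ => e v, ← Finset.mul_sum, ← prob_comp p f V a]
    have : X = fun ω => f (V ω) := funext hX
    rw [this]
  rw [h1, ← h3, h4]
  field_simp

set_option synthInstance.maxHeartbeats 1000000 in
set_option synthInstance.maxSize 512 in
set_option maxHeartbeats 2000000 in
/-- Outer-bound step `R₀ ≤ I(U ; Y, Y₁ | U₁)`:
with `U₁ = Y₁^{J-1}` and `U = (Y^{J-1}, W₀, Z_{J+1}^N, J)` (prefixes/suffixes encoded as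
option-padded length-`N` vectors), `(1/N)·I(W₀ ; Y^N, Y₁^N) ≤ I(U ; Y_J, Y_{1,J} | U₁)`. -/
theorem outer_bound_R0
    {𝒲₀ 𝒴 𝒴₁ 𝒵 : Type*}
    [Fintype 𝒲₀] [DecidableEq 𝒲₀] [Fintype 𝒴] [DecidableEq 𝒴]
    [Fintype 𝒴₁] [DecidableEq 𝒴₁] [Fintype 𝒵] [DecidableEq 𝒵]
    (p : Ω → ℝ) (hp : ∀ ω, 0 ≤ p ω) (hsum : ∑ ω, p ω = 1)
    (N : ℕ) (W₀ : Ω → 𝒲₀) (Y : Fin N → Ω → 𝒴) (Y₁ : Fin N → Ω → 𝒴₁) (Z : Fin N → Ω → 𝒵)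
    (J : Ω → Fin N)
    (hJ : ∀ j : Fin N, prob p J j = 1 / N)
    (hindep : Indep p J
      (fun ω => (W₀ ω, (fun i => Y i ω : Fin N → 𝒴), (fun i => Y₁ i ω : Fin N → 𝒴₁),
        (fun i => Z i ω : Fin N → 𝒵)))) :
    (1 / (N : ℝ)) * mi p W₀
        (fun ω => ((fun i => Y i ω : Fin N → 𝒴), (fun i => Y₁ i ω : Fin N → 𝒴₁)))
      ≤ cmi p
          -- U = (Y^{J-1}, W₀, Z_{J+1}^N, J)
          (fun ω =>
            ((fun i : Fin N => if (i : ℕ) < (J ω : ℕ) then some (Y i ω) else none),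
              W₀ ω,
              (fun i : Fin N => if (J ω : ℕ) < (i : ℕ) then some (Z i ω) else none),
              J ω))
          -- (Y_J, Y_{1,J})
          (fun ω => (Y (J ω) ω, Y₁ (J ω) ω))
          -- U₁ = Y₁^{J-1}
          (fun ω => (fun i : Fin N => if (i : ℕ) < (J ω : ℕ) then some (Y₁ i ω) else none)) := by
  classical
  have hΩ : Nonempty Ω := by
    by_contra h
    rw [not_nonempty_iff] at h
    rw [Finset.univ_eq_empty, Finset.sum_empty] at hsum
    exact one_ne_zero hsum.symm
  obtain ⟨ω₀⟩ := hΩ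
  have hN0 : 0 < N := (J ω₀).pos
  have hN : (N : ℝ) ≠ 0 := Nat.cast_ne_zero.mpr hN0.ne'
  have y0 : 𝒴 := Y ⟨0, hN0⟩ ω₀
  have y10 : 𝒴₁ := Y₁ ⟨0, hN0⟩ ω₀
  have step1 : cmi p (fun ω => ((fun i : Fin N => if (i : ℕ) < (J ω : ℕ) then some (Y i ω) else none), W₀ ω, (fun i : Fin N => if (J ω : ℕ) < (i : ℕ) then some (Z i ω) else none), J ω)) (fun ω => (Y (J ω) ω, Y₁ (J ω) ω)) (fun ω => (fun i : Fin N => if (i : ℕ) < (J ω : ℕ) then some (Y₁ i ω) else none))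
      = cmi p (fun ω => ((fun ω => ((fun i : Fin N => if (i : ℕ) < (J ω : ℕ) then some (Y i ω) else none), W₀ ω, (fun i : Fin N => if (J ω : ℕ) < (i : ℕ) then some (Z i ω) else none))) ω, J ω)) (fun ω => (Y (J ω) ω, Y₁ (J ω) ω)) (fun ω => (fun i : Fin N => if (i : ℕ) < (J ω : ℕ) then some (Y₁ i ω) else none)) :=
    cmi_biDet p _ _ _ _ _ _
      (fun v => ((v.1, v.2.1, v.2.2.1), v.2.2.2)) (fun v => (v.1.1, v.1.2.1, v.1.2.2, v.2))
      (fun ω => rfl) (fun ω => rfl)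
      id id (fun ω => rfl) (fun ω => rfl)
      id id (fun ω => rfl) (fun ω => rfl)
  have step2 : cmi p (fun ω => ((fun ω => ((fun i : Fin N => if (i : ℕ) < (J ω : ℕ) then some (Y i ω) else none), W₀ ω, (fun i : Fin N => if (J ω : ℕ) < (i : ℕ) then some (Z i ω) else none))) ω, J ω)) (fun ω => (Y (J ω) ω, Y₁ (J ω) ω)) (fun ω => (fun i : Fin N => if (i : ℕ) < (J ω : ℕ) then some (Y₁ i ω) else none))
      = cmi p J (fun ω => (Y (J ω) ω, Y₁ (J ω) ω)) (fun ω => (fun i : Fin N => if (i : ℕ) < (J ω : ℕ) then some (Y₁ i ω) else none)) + cmi p (fun ω => ((fun i : Fin N => if (i : ℕ) < (J ω : ℕ) then some (Y i ω) else none), W₀ ω, (fun i : Fin N => if (J ω : ℕ) < (i : ℕ) then some (Z i ω) else none))) (fun ω => (Y (J ω) ω, Y₁ (J ω) ω)) (fun ω => (J ω, (fun ω => (fun i : Fin N => if (i : ℕ) < (J ω : ℕ) then some (Y₁ i ω) else none)) ω)) :=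
    cmi_chain p (fun ω => ((fun i : Fin N => if (i : ℕ) < (J ω : ℕ) then some (Y i ω) else none), W₀ ω, (fun i : Fin N => if (J ω : ℕ) < (i : ℕ) then some (Z i ω) else none))) (fun ω => (Y (J ω) ω, Y₁ (J ω) ω)) J (fun ω => (fun i : Fin N => if (i : ℕ) < (J ω : ℕ) then some (Y₁ i ω) else none))
  have step3 : 0 ≤ cmi p J (fun ω => (Y (J ω) ω, Y₁ (J ω) ω)) (fun ω => (fun i : Fin N => if (i : ℕ) < (J ω : ℕ) then some (Y₁ i ω) else none)) := cmi_nonneg p hp hsum _ _ _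
  have step4 : cmi p (fun ω => ((fun i : Fin N => if (i : ℕ) < (J ω : ℕ) then some (Y i ω) else none), W₀ ω, (fun i : Fin N => if (J ω : ℕ) < (i : ℕ) then some (Z i ω) else none))) (fun ω => (Y (J ω) ω, Y₁ (J ω) ω)) (fun ω => (J ω, (fun ω => (fun i : Fin N => if (i : ℕ) < (J ω : ℕ) then some (Y₁ i ω) else none)) ω))
      = cmi p (fun ω => ((fun i : Fin N => if (i : ℕ) < (J ω : ℕ) then some (Y i ω) else none), W₀ ω, (fun i : Fin N => if (J ω : ℕ) < (i : ℕ) then some (Z i ω) else none))) (fun ω => (Y (J ω) ω, Y₁ (J ω) ω)) (fun ω => ((fun ω => (fun i : Fin N => if (i : ℕ) < (J ω : ℕ) then some (Y₁ i ω) else none)) ω, J ω)) :=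
    cmi_biDet p _ _ _ _ _ _ id id (fun ω => rfl) (fun ω => rfl)
      id id (fun ω => rfl) (fun ω => rfl)
      Prod.swap Prod.swap (fun ω => rfl) (fun ω => rfl)
  have step5 : cmi p (fun ω => ((fun i : Fin N => if (i : ℕ) < (J ω : ℕ) then some (Y i ω) else none), W₀ ω, (fun i : Fin N => if (J ω : ℕ) < (i : ℕ) then some (Z i ω) else none))) (fun ω => (Y (J ω) ω, Y₁ (J ω) ω)) (fun ω => ((fun ω => (fun i : Fin N => if (i : ℕ) < (J ω : ℕ) then some (Y₁ i ω) else none)) ω, J ω))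
      = ∑ j, (1 / N : ℝ) * cmi (fun ω => if J ω = j then (N : ℝ) * p ω else 0)
          (fun ω => ((fun i : Fin N => if (i : ℕ) < (J ω : ℕ) then some (Y i ω) else none), W₀ ω, (fun i : Fin N => if (J ω : ℕ) < (i : ℕ) then some (Z i ω) else none))) (fun ω => (Y (J ω) ω, Y₁ (J ω) ω)) (fun ω => (fun i : Fin N => if (i : ℕ) < (J ω : ℕ) then some (Y₁ i ω) else none)) :=
    cmi_cond_decomp hN p J hJ _ _ _
  have step6 : ∀ j : Fin N, cmi (fun ω => if J ω = j then (N : ℝ) * p ω else 0) (fun ω => ((fun i : Fin N => if (i : ℕ) < (J ω : ℕ) then some (Y i ω) else none), W₀ ω, (fun i : Fin N => if (J ω : ℕ) < (i : ℕ) then some (Z i ω) else none))) (fun ω => (Y (J ω) ω, Y₁ (J ω) ω)) (fun ω => (fun i : Fin N => if (i : ℕ) < (J ω : ℕ) then some (Y₁ i ω) else none))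
      = cmi (fun ω => if J ω = j then (N : ℝ) * p ω else 0) (fun ω => ((fun i : Fin N => if (i : ℕ) < (j : ℕ) then some (Y i ω) else none), W₀ ω, (fun i : Fin N => if (j : ℕ) < (i : ℕ) then some (Z i ω) else none))) (fun ω => (Y j ω, Y₁ j ω)) (fun ω => (fun i : Fin N => if (i : ℕ) < (j : ℕ) then some (Y₁ i ω) else none)) := by
    intro j
    have hsupp : ∀ ω, (if J ω = j then (N : ℝ) * p ω else 0) ≠ 0 → J ω = j := by
      intro ω h
      by_contra hne
      simp [hne] at h
    refine cmi_congr _ _ _ _ _ _ _ ?_ ?_ ?_ <;>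
      intro ω h <;> rw [hsupp ω h]
  have step7 : ∀ j : Fin N, cmi (fun ω => if J ω = j then (N : ℝ) * p ω else 0) (fun ω => ((fun i : Fin N => if (i : ℕ) < (j : ℕ) then some (Y i ω) else none), W₀ ω, (fun i : Fin N => if (j : ℕ) < (i : ℕ) then some (Z i ω) else none))) (fun ω => (Y j ω, Y₁ j ω)) (fun ω => (fun i : Fin N => if (i : ℕ) < (j : ℕ) then some (Y₁ i ω) else none))
      = cmi p (fun ω => ((fun i : Fin N => if (i : ℕ) < (j : ℕ) then some (Y i ω) else none), W₀ ω, (fun i : Fin N => if (j : ℕ) < (i : ℕ) then some (Z i ω) else none))) (fun ω => (Y j ω, Y₁ j ω)) (fun ω => (fun i : Fin N => if (i : ℕ) < (j : ℕ) then some (Y₁ i ω) else none)) := by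
    intro j
    refine cmi_prob_congr _ p _ _ _ ?_ ?_ ?_ ?_
    · intro v
      exact prob_cond_of_indep hN p J (fun ω => (W₀ ω, (fun i => Y i ω : Fin N → 𝒴), (fun i => Y₁ i ω : Fin N → 𝒴₁), (fun i => Z i ω : Fin N → 𝒵))) hJ hindep j _
        (fun w => (((fun i : Fin N => if (i : ℕ) < (j : ℕ) then some (w.2.1 i) else none), w.1, (fun i : Fin N => if (j : ℕ) < (i : ℕ) then some (w.2.2.2 i) else none)), (fun i : Fin N => if (i : ℕ) < (j : ℕ) then some (w.2.2.1 i) else none)))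
        (fun ω => rfl) v
    · intro v
      exact prob_cond_of_indep hN p J (fun ω => (W₀ ω, (fun i => Y i ω : Fin N → 𝒴), (fun i => Y₁ i ω : Fin N → 𝒴₁), (fun i => Z i ω : Fin N → 𝒵))) hJ hindep j _
        (fun w => ((w.2.1 j, w.2.2.1 j), (fun i : Fin N => if (i : ℕ) < (j : ℕ) then some (w.2.2.1 i) else none)))
        (fun ω => rfl) v
    · intro v
      exact prob_cond_of_indep hN p J (fun ω => (W₀ ω, (fun i => Y i ω : Fin N → 𝒴), (fun i => Y₁ i ω : Fin N → 𝒴₁), (fun i => Z i ω : Fin N → 𝒵))) hJ hindep j _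
        (fun w => (((fun i : Fin N => if (i : ℕ) < (j : ℕ) then some (w.2.1 i) else none), w.1, (fun i : Fin N => if (j : ℕ) < (i : ℕ) then some (w.2.2.2 i) else none)), (w.2.1 j, w.2.2.1 j), (fun i : Fin N => if (i : ℕ) < (j : ℕ) then some (w.2.2.1 i) else none)))
        (fun ω => rfl) v
    · intro v
      exact prob_cond_of_indep hN p J (fun ω => (W₀ ω, (fun i => Y i ω : Fin N → 𝒴), (fun i => Y₁ i ω : Fin N → 𝒴₁), (fun i => Z i ω : Fin N → 𝒵))) hJ hindep j _
        (fun w => (fun i : Fin N => if (i : ℕ) < (j : ℕ) then some (w.2.2.1 i) else none)) (fun ω => rfl) v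
  have step8 : ∀ j : Fin N, cmi p W₀ (fun ω => (Y j ω, Y₁ j ω)) (fun ω => ((fun i : Fin N => if (i : ℕ) < (j : ℕ) then some (Y i ω) else none), (fun i : Fin N => if (i : ℕ) < (j : ℕ) then some (Y₁ i ω) else none))) ≤ cmi p (fun ω => ((fun i : Fin N => if (i : ℕ) < (j : ℕ) then some (Y i ω) else none), W₀ ω, (fun i : Fin N => if (j : ℕ) < (i : ℕ) then some (Z i ω) else none))) (fun ω => (Y j ω, Y₁ j ω)) (fun ω => (fun i : Fin N => if (i : ℕ) < (j : ℕ) then some (Y₁ i ω) else none)) := by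
    intro j
    have r1 : cmi p (fun ω => ((fun i : Fin N => if (i : ℕ) < (j : ℕ) then some (Y i ω) else none), W₀ ω, (fun i : Fin N => if (j : ℕ) < (i : ℕ) then some (Z i ω) else none))) (fun ω => (Y j ω, Y₁ j ω)) (fun ω => (fun i : Fin N => if (i : ℕ) < (j : ℕ) then some (Y₁ i ω) else none))
        = cmi p (fun ω => ((W₀ ω, (fun i : Fin N => if (j : ℕ) < (i : ℕ) then some (Z i ω) else none)), (fun i : Fin N => if (i : ℕ) < (j : ℕ) then some (Y i ω) else none))) (fun ω => (Y j ω, Y₁ j ω)) (fun ω => (fun i : Fin N => if (i : ℕ) < (j : ℕ) then some (Y₁ i ω) else none)) :=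
      cmi_biDet p _ _ _ _ _ _
        (fun v => ((v.2.1, v.2.2), v.1)) (fun v => (v.2, v.1.1, v.1.2))
        (fun ω => rfl) (fun ω => rfl) id id (fun ω => rfl) (fun ω => rfl)
        id id (fun ω => rfl) (fun ω => rfl)
    have r2 : cmi p (fun ω => ((W₀ ω, (fun i : Fin N => if (j : ℕ) < (i : ℕ) then some (Z i ω) else none)), (fun i : Fin N => if (i : ℕ) < (j : ℕ) then some (Y i ω) else none))) (fun ω => (Y j ω, Y₁ j ω)) (fun ω => (fun i : Fin N => if (i : ℕ) < (j : ℕ) then some (Y₁ i ω) else none))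
        = cmi p (fun ω => (fun i : Fin N => if (i : ℕ) < (j : ℕ) then some (Y i ω) else none)) (fun ω => (Y j ω, Y₁ j ω)) (fun ω => (fun i : Fin N => if (i : ℕ) < (j : ℕ) then some (Y₁ i ω) else none))
          + cmi p (fun ω => (W₀ ω, (fun i : Fin N => if (j : ℕ) < (i : ℕ) then some (Z i ω) else none))) (fun ω => (Y j ω, Y₁ j ω))
              (fun ω => ((fun i : Fin N => if (i : ℕ) < (j : ℕ) then some (Y i ω) else none), (fun ω => (fun i : Fin N => if (i : ℕ) < (j : ℕ) then some (Y₁ i ω) else none)) ω)) :=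
      cmi_chain p (fun ω => (W₀ ω, (fun i : Fin N => if (j : ℕ) < (i : ℕ) then some (Z i ω) else none))) (fun ω => (Y j ω, Y₁ j ω)) (fun ω => (fun i : Fin N => if (i : ℕ) < (j : ℕ) then some (Y i ω) else none)) (fun ω => (fun i : Fin N => if (i : ℕ) < (j : ℕ) then some (Y₁ i ω) else none))
    have r3 : 0 ≤ cmi p (fun ω => (fun i : Fin N => if (i : ℕ) < (j : ℕ) then some (Y i ω) else none)) (fun ω => (Y j ω, Y₁ j ω)) (fun ω => (fun i : Fin N => if (i : ℕ) < (j : ℕ) then some (Y₁ i ω) else none)) := cmi_nonneg p hp hsum _ _ _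
    have r4 : cmi p (fun ω => (W₀ ω, (fun i : Fin N => if (j : ℕ) < (i : ℕ) then some (Z i ω) else none))) (fun ω => (Y j ω, Y₁ j ω))
          (fun ω => ((fun i : Fin N => if (i : ℕ) < (j : ℕ) then some (Y i ω) else none), (fun ω => (fun i : Fin N => if (i : ℕ) < (j : ℕ) then some (Y₁ i ω) else none)) ω))
        = cmi p (fun ω => ((fun i : Fin N => if (j : ℕ) < (i : ℕ) then some (Z i ω) else none), W₀ ω)) (fun ω => (Y j ω, Y₁ j ω))
            (fun ω => ((fun i : Fin N => if (i : ℕ) < (j : ℕ) then some (Y i ω) else none), (fun ω => (fun i : Fin N => if (i : ℕ) < (j : ℕ) then some (Y₁ i ω) else none)) ω)) :=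
      cmi_biDet p _ _ _ _ _ _ Prod.swap Prod.swap (fun ω => rfl) (fun ω => rfl)
        id id (fun ω => rfl) (fun ω => rfl) id id (fun ω => rfl) (fun ω => rfl)
    have r5 : cmi p (fun ω => ((fun i : Fin N => if (j : ℕ) < (i : ℕ) then some (Z i ω) else none), W₀ ω)) (fun ω => (Y j ω, Y₁ j ω))
          (fun ω => ((fun i : Fin N => if (i : ℕ) < (j : ℕ) then some (Y i ω) else none), (fun ω => (fun i : Fin N => if (i : ℕ) < (j : ℕ) then some (Y₁ i ω) else none)) ω))
        = cmi p W₀ (fun ω => (Y j ω, Y₁ j ω)) (fun ω => ((fun i : Fin N => if (i : ℕ) < (j : ℕ) then some (Y i ω) else none), (fun ω => (fun i : Fin N => if (i : ℕ) < (j : ℕ) then some (Y₁ i ω) else none)) ω))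
          + cmi p (fun ω => (fun i : Fin N => if (j : ℕ) < (i : ℕ) then some (Z i ω) else none)) (fun ω => (Y j ω, Y₁ j ω))
              (fun ω => (W₀ ω, (fun ω => ((fun i : Fin N => if (i : ℕ) < (j : ℕ) then some (Y i ω) else none), (fun ω => (fun i : Fin N => if (i : ℕ) < (j : ℕ) then some (Y₁ i ω) else none)) ω)) ω)) :=
      cmi_chain p (fun ω => (fun i : Fin N => if (j : ℕ) < (i : ℕ) then some (Z i ω) else none)) (fun ω => (Y j ω, Y₁ j ω)) W₀ (fun ω => ((fun i : Fin N => if (i : ℕ) < (j : ℕ) then some (Y i ω) else none), (fun ω => (fun i : Fin N => if (i : ℕ) < (j : ℕ) then some (Y₁ i ω) else none)) ω))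
    have r6 : 0 ≤ cmi p (fun ω => (fun i : Fin N => if (j : ℕ) < (i : ℕ) then some (Z i ω) else none)) (fun ω => (Y j ω, Y₁ j ω))
        (fun ω => (W₀ ω, (fun ω => ((fun i : Fin N => if (i : ℕ) < (j : ℕ) then some (Y i ω) else none), (fun ω => (fun i : Fin N => if (i : ℕ) < (j : ℕ) then some (Y₁ i ω) else none)) ω)) ω)) := cmi_nonneg p hp hsum _ _ _
    have r7 : cmi p W₀ (fun ω => (Y j ω, Y₁ j ω)) (fun ω => ((fun i : Fin N => if (i : ℕ) < (j : ℕ) then some (Y i ω) else none), (fun ω => (fun i : Fin N => if (i : ℕ) < (j : ℕ) then some (Y₁ i ω) else none)) ω)) = cmi p W₀ (fun ω => (Y j ω, Y₁ j ω)) (fun ω => ((fun i : Fin N => if (i : ℕ) < (j : ℕ) then some (Y i ω) else none), (fun i : Fin N => if (i : ℕ) < (j : ℕ) then some (Y₁ i ω) else none))) :=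
      cmi_biDet p _ _ _ _ _ _ id id (fun ω => rfl) (fun ω => rfl)
        id id (fun ω => rfl) (fun ω => rfl) id id (fun ω => rfl) (fun ω => rfl)
    linarith
  have perj : ∀ j : Fin N, cmi p W₀ (fun ω => (Y j ω, Y₁ j ω)) (fun ω => ((fun i : Fin N => if (i : ℕ) < (j : ℕ) then some (Y i ω) else none), (fun i : Fin N => if (i : ℕ) < (j : ℕ) then some (Y₁ i ω) else none)))
      = (fun k : ℕ => ent p (fun ω => (W₀ ω, (fun i : Fin N => if (i : ℕ) < k then some (Y i ω) else none), (fun i : Fin N => if (i : ℕ) < k then some (Y₁ i ω) else none))) - ent p (fun ω => ((fun i : Fin N => if (i : ℕ) < k then some (Y i ω) else none), (fun i : Fin N => if (i : ℕ) < k then some (Y₁ i ω) else none)))) (j : ℕ) - (fun k : ℕ => ent p (fun ω => (W₀ ω, (fun i : Fin N => if (i : ℕ) < k then some (Y i ω) else none), (fun i : Fin N => if (i : ℕ) < k then some (Y₁ i ω) else none))) - ent p (fun ω => ((fun i : Fin N => if (i : ℕ) < k then some (Y i ω) else none), (fun i : Fin N => if (i : ℕ) < k then some (Y₁ i ω) else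 none)))) ((j : ℕ) + 1) := by
    intro j
    have hfp : ∀ ω : Ω, ((fun i : Fin N => if (i : ℕ) < ((j : ℕ) + 1) then some (Y i ω) else none), (fun i : Fin N => if (i : ℕ) < ((j : ℕ) + 1) then some (Y₁ i ω) else none))
        = ((fun i : Fin N => if (i : ℕ) = (j : ℕ) then some (Y j ω) else (if (i : ℕ) < (j : ℕ) then some (Y i ω) else none)),
           (fun i : Fin N => if (i : ℕ) = (j : ℕ) then some (Y₁ j ω) else (if (i : ℕ) < (j : ℕ) then some (Y₁ i ω) else none))) := by
      intro ω
      simp only [Prod.mk.injEq]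
      constructor <;> funext i <;> by_cases h : (i : ℕ) = (j : ℕ)
      · have hij : i = j := Fin.ext h
        subst hij; simp
      · simp [h, Nat.lt_succ_iff_lt_or_eq, le_iff_lt_or_eq, Fin.ext_iff]
      · have hij : i = j := Fin.ext h
        subst hij; simp
      · simp [h, Nat.lt_succ_iff_lt_or_eq, le_iff_lt_or_eq, Fin.ext_iff]
    have hgp : ∀ ω : Ω, ((Y j ω, Y₁ j ω), (fun i : Fin N => if (i : ℕ) < (j : ℕ) then some (Y i ω) else none), (fun i : Fin N => if (i : ℕ) < (j : ℕ) then some (Y₁ i ω) else none))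
        = (((((fun i : Fin N => if (i : ℕ) < ((j : ℕ) + 1) then some (Y i ω) else none)) j).getD y0, (((fun i : Fin N => if (i : ℕ) < ((j : ℕ) + 1) then some (Y₁ i ω) else none)) j).getD y10),
           (fun i : Fin N => if (i : ℕ) = (j : ℕ) then none else ((fun i : Fin N => if (i : ℕ) < ((j : ℕ) + 1) then some (Y i ω) else none)) i),
           (fun i : Fin N => if (i : ℕ) = (j : ℕ) then none else ((fun i : Fin N => if (i : ℕ) < ((j : ℕ) + 1) then some (Y₁ i ω) else none)) i)) := by
      intro ω
      simp only [Prod.mk.injEq]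
      refine ⟨⟨by simp, by simp⟩, ?_, ?_⟩ <;> funext i <;> by_cases h : (i : ℕ) = (j : ℕ)
      · simp [h]
      · simp [h, Nat.lt_succ_iff_lt_or_eq, le_iff_lt_or_eq, Fin.ext_iff]
      · simp [h]
      · simp [h, Nat.lt_succ_iff_lt_or_eq, le_iff_lt_or_eq, Fin.ext_iff]
    have ebd1 : ent p (fun ω => ((Y j ω, Y₁ j ω), (fun i : Fin N => if (i : ℕ) < (j : ℕ) then some (Y i ω) else none), (fun i : Fin N => if (i : ℕ) < (j : ℕ) then some (Y₁ i ω) else none)))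
        = ent p (fun ω => ((fun i : Fin N => if (i : ℕ) < ((j : ℕ) + 1) then some (Y i ω) else none), (fun i : Fin N => if (i : ℕ) < ((j : ℕ) + 1) then some (Y₁ i ω) else none))) :=
      ent_biDet p (fun ω => ((Y j ω, Y₁ j ω), (fun i : Fin N => if (i : ℕ) < (j : ℕ) then some (Y i ω) else none), (fun i : Fin N => if (i : ℕ) < (j : ℕ) then some (Y₁ i ω) else none)))
        (fun ω => ((fun i : Fin N => if (i : ℕ) < ((j : ℕ) + 1) then some (Y i ω) else none), (fun i : Fin N => if (i : ℕ) < ((j : ℕ) + 1) then some (Y₁ i ω) else none)))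
        (fun v => ((fun i : Fin N => if (i : ℕ) = (j : ℕ) then some v.1.1 else v.2.1 i),
          (fun i : Fin N => if (i : ℕ) = (j : ℕ) then some v.1.2 else v.2.2 i)))
        (fun v => (((v.1 j).getD y0, (v.2 j).getD y10),
          (fun i : Fin N => if (i : ℕ) = (j : ℕ) then none else v.1 i),
          (fun i : Fin N => if (i : ℕ) = (j : ℕ) then none else v.2 i)))
        (fun ω => hfp ω) (fun ω => hgp ω)
    have ebd2 : ent p (fun ω => (W₀ ω, (Y j ω, Y₁ j ω), (fun i : Fin N => if (i : ℕ) < (j : ℕ) then some (Y i ω) else none), (fun i : Fin N => if (i : ℕ) < (j : ℕ) then some (Y₁ i ω) else none)))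
        = ent p (fun ω => (W₀ ω, (fun i : Fin N => if (i : ℕ) < ((j : ℕ) + 1) then some (Y i ω) else none), (fun i : Fin N => if (i : ℕ) < ((j : ℕ) + 1) then some (Y₁ i ω) else none))) :=
      ent_biDet p (fun ω => (W₀ ω, (Y j ω, Y₁ j ω), (fun i : Fin N => if (i : ℕ) < (j : ℕ) then some (Y i ω) else none), (fun i : Fin N => if (i : ℕ) < (j : ℕ) then some (Y₁ i ω) else none)))
        (fun ω => (W₀ ω, (fun i : Fin N => if (i : ℕ) < ((j : ℕ) + 1) then some (Y i ω) else none), (fun i : Fin N => if (i : ℕ) < ((j : ℕ) + 1) then some (Y₁ i ω) else none)))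
        (fun v => (v.1, ((fun i : Fin N => if (i : ℕ) = (j : ℕ) then some v.2.1.1 else v.2.2.1 i),
          (fun i : Fin N => if (i : ℕ) = (j : ℕ) then some v.2.1.2 else v.2.2.2 i))))
        (fun v => (v.1, ((v.2.1 j).getD y0, (v.2.2 j).getD y10),
          (fun i : Fin N => if (i : ℕ) = (j : ℕ) then none else v.2.1 i),
          (fun i : Fin N => if (i : ℕ) = (j : ℕ) then none else v.2.2 i)))
        (fun ω => congrArg (Prod.mk (W₀ ω)) (hfp ω)) (fun ω => congrArg (Prod.mk (W₀ ω)) (hgp ω))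
    simp only [cmi]
    rw [ebd1, ebd2]
    ring
  have sumtel : ∑ j : Fin N, cmi p W₀ (fun ω => (Y j ω, Y₁ j ω)) (fun ω => ((fun i : Fin N => if (i : ℕ) < (j : ℕ) then some (Y i ω) else none), (fun i : Fin N => if (i : ℕ) < (j : ℕ) then some (Y₁ i ω) else none))) = mi p W₀ (fun ω => ((fun i => Y i ω : Fin N → 𝒴), (fun i => Y₁ i ω : Fin N → 𝒴₁))) := by
    rw [Finset.sum_congr rfl fun j _ => perj j]
    rw [Fin.sum_univ_eq_sum_range (fun k => (fun k : ℕ => ent p (fun ω => (W₀ ω, (fun i : Fin N => if (i : ℕ) < k then some (Y i ω) else none), (fun i : Fin N => if (i : ℕ) < k then some (Y₁ i ω) else none))) - ent p (fun ω => ((fun i : Fin N => if (i : ℕ) < k then some (Y i ω) else none), (fun i : Fin N => if (i : ℕ) < k then some (Y₁ i ω) else none)))) k - (fun k : ℕ => ent p (fun ω => (W₀ ω, (fun i : Fin N => if (i : ℕ) < k then some (Y i ω) else none), (fun i : Fin N => if (i : ℕ) < k then some (Y₁ i ω) else none))) - ent p (fun ω => ((fun i : Fin N => if (i : ℕ) <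 k then some (Y i ω) else none), (fun i : Fin N => if (i : ℕ) < k then some (Y₁ i ω) else none)))) (k + 1)) N]
    rw [Finset.sum_range_sub' (fun k : ℕ => ent p (fun ω => (W₀ ω, (fun i : Fin N => if (i : ℕ) < k then some (Y i ω) else none), (fun i : Fin N => if (i : ℕ) < k then some (Y₁ i ω) else none))) - ent p (fun ω => ((fun i : Fin N => if (i : ℕ) < k then some (Y i ω) else none), (fun i : Fin N => if (i : ℕ) < k then some (Y₁ i ω) else none)))) N]
    have c1 : ent p (fun ω => ((fun i : Fin N => if (i : ℕ) < 0 then some (Y i ω) else none), (fun i : Fin N => if (i : ℕ) < 0 then some (Y₁ i ω) else none))) = 0 := by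
      have e : (fun ω : Ω => ((fun i : Fin N => if (i : ℕ) < 0 then some (Y i ω) else none), (fun i : Fin N => if (i : ℕ) < 0 then some (Y₁ i ω) else none)))
          = (fun _ : Ω => ((fun _ : Fin N => (none : Option 𝒴)), (fun _ : Fin N => (none : Option 𝒴₁)))) := by
        funext ω
        simp only [Prod.mk.injEq]
        constructor <;> funext i <;> simp
      rw [e]
      exact ent_const p hsum _
    have c2 : ent p (fun ω => (W₀ ω, (fun i : Fin N => if (i : ℕ) < 0 then some (Y i ω) else none), (fun i : Fin N => if (i : ℕ) < 0 then some (Y₁ i ω) else none))) = ent p W₀ :=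
      ent_biDet p (fun ω => (W₀ ω, (fun i : Fin N => if (i : ℕ) < 0 then some (Y i ω) else none), (fun i : Fin N => if (i : ℕ) < 0 then some (Y₁ i ω) else none))) W₀ (fun v => v.1)
        (fun w => (w, (fun _ : Fin N => (none : Option 𝒴)), (fun _ : Fin N => (none : Option 𝒴₁))))
        (fun ω => rfl)
        (fun ω => by
          simp only [Prod.mk.injEq]
          refine ⟨trivial, ?_, ?_⟩ <;> funext i <;> simp)
    have c3 : ent p (fun ω => ((fun i : Fin N => if (i : ℕ) < N then some (Y i ω) else none), (fun i : Fin N => if (i : ℕ) < N then some (Y₁ i ω) else none))) = ent p (fun ω => ((fun i => Y i ω : Fin N → 𝒴), (fun i => Y₁ i ω : Fin N → 𝒴₁))) :=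
      ent_biDet p (fun ω => ((fun i : Fin N => if (i : ℕ) < N then some (Y i ω) else none), (fun i : Fin N => if (i : ℕ) < N then some (Y₁ i ω) else none))) (fun ω => ((fun i => Y i ω : Fin N → 𝒴), (fun i => Y₁ i ω : Fin N → 𝒴₁)))
        (fun v => ((fun i : Fin N => (v.1 i).getD y0), (fun i : Fin N => (v.2 i).getD y10)))
        (fun v => ((fun i : Fin N => if (i : ℕ) < N then some (v.1 i) else none),
          (fun i : Fin N => if (i : ℕ) < N then some (v.2 i) else none)))
        (fun ω => by
          simp only [Prod.mk.injEq]
          constructor <;> funext i <;> simp [i.isLt])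
        (fun ω => rfl)
    have c4 : ent p (fun ω => (W₀ ω, (fun i : Fin N => if (i : ℕ) < N then some (Y i ω) else none), (fun i : Fin N => if (i : ℕ) < N then some (Y₁ i ω) else none))) = ent p (fun ω => (W₀ ω, (fun ω => ((fun i => Y i ω : Fin N → 𝒴), (fun i => Y₁ i ω : Fin N → 𝒴₁))) ω)) :=
      ent_biDet p (fun ω => (W₀ ω, (fun i : Fin N => if (i : ℕ) < N then some (Y i ω) else none), (fun i : Fin N => if (i : ℕ) < N then some (Y₁ i ω) else none))) (fun ω => (W₀ ω, (fun ω => ((fun i => Y i ω : Fin N → 𝒴), (fun i => Y₁ i ω : Fin N → 𝒴₁))) ω))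
        (fun v => (v.1, (fun i : Fin N => (v.2.1 i).getD y0), (fun i : Fin N => (v.2.2 i).getD y10)))
        (fun v => (v.1, (fun i : Fin N => if (i : ℕ) < N then some (v.2.1 i) else none),
          (fun i : Fin N => if (i : ℕ) < N then some (v.2.2 i) else none)))
        (fun ω => by
          simp only [Prod.mk.injEq]
          refine ⟨trivial, ?_, ?_⟩ <;> funext i <;> simp [i.isLt])
        (fun ω => rfl)
    simp only [mi]
    rw [c1, c2, c3, c4]
    ring
  calc (1 / (N : ℝ)) * mi p W₀ (fun ω => ((fun i => Y i ω : Fin N → 𝒴), (fun i => Y₁ i ω : Fin N → 𝒴₁)))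
      = (1 / (N : ℝ)) * ∑ j : Fin N, cmi p W₀ (fun ω => (Y j ω, Y₁ j ω)) (fun ω => ((fun i : Fin N => if (i : ℕ) < (j : ℕ) then some (Y i ω) else none), (fun i : Fin N => if (i : ℕ) < (j : ℕ) then some (Y₁ i ω) else none))) := by rw [sumtel]
    _ = ∑ j : Fin N, (1 / (N : ℝ)) * cmi p W₀ (fun ω => (Y j ω, Y₁ j ω)) (fun ω => ((fun i : Fin N => if (i : ℕ) < (j : ℕ) then some (Y i ω) else none), (fun i : Fin N => if (i : ℕ) < (j : ℕ) then some (Y₁ i ω) else none))) := Finset.mul_sum _ _ _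
    _ ≤ ∑ j : Fin N, (1 / (N : ℝ)) * cmi (fun ω => if J ω = j then (N : ℝ) * p ω else 0)
        (fun ω => ((fun i : Fin N => if (i : ℕ) < (J ω : ℕ) then some (Y i ω) else none), W₀ ω, (fun i : Fin N => if (J ω : ℕ) < (i : ℕ) then some (Z i ω) else none))) (fun ω => (Y (J ω) ω, Y₁ (J ω) ω)) (fun ω => (fun i : Fin N => if (i : ℕ) < (J ω : ℕ) then some (Y₁ i ω) else none)) :=
      Finset.sum_le_sum fun j _ => mul_le_mul_of_nonneg_left
        ((step8 j).trans_eq ((step6 j).trans (step7 j)).symm) (by positivity)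
    _ = cmi p (fun ω => ((fun i : Fin N => if (i : ℕ) < (J ω : ℕ) then some (Y i ω) else none), W₀ ω, (fun i : Fin N => if (J ω : ℕ) < (i : ℕ) then some (Z i ω) else none))) (fun ω => (Y (J ω) ω, Y₁ (J ω) ω)) (fun ω => ((fun ω => (fun i : Fin N => if (i : ℕ) < (J ω : ℕ) then some (Y₁ i ω) else none)) ω, J ω)) := step5.symm
    _ = cmi p (fun ω => ((fun i : Fin N => if (i : ℕ) < (J ω : ℕ) then some (Y i ω) else none), W₀ ω, (fun i : Fin N => if (J ω : ℕ) < (i : ℕ) then some (Z i ω) else none))) (fun ω => (Y (J ω) ω, Y₁ (J ω) ω)) (fun ω => (J ω, (fun ω => (fun i : Fin N => if (i : ℕ) < (J ω : ℕ) then some (Y₁ i ω) else none)) ω)) := step4.symm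
    _ ≤ cmi p (fun ω => ((fun ω => ((fun i : Fin N => if (i : ℕ) < (J ω : ℕ) then some (Y i ω) else none), W₀ ω, (fun i : Fin N => if (J ω : ℕ) < (i : ℕ) then some (Z i ω) else none))) ω, J ω)) (fun ω => (Y (J ω) ω, Y₁ (J ω) ω)) (fun ω => (fun i : Fin N => if (i : ℕ) < (J ω : ℕ) then some (Y₁ i ω) else none)) := by
        rw [step2]; linarith
    _ = cmi p (fun ω => ((fun i : Fin N => if (i : ℕ) < (J ω : ℕ) then some (Y i ω) else none), W₀ ω, (fun i : Fin N => if (J ω : ℕ) < (i : ℕ) then some (Z i ω) else none), J ω)) (fun ω => (Y (J ω) ω, Y₁ (J ω) ω)) (fun ω => (fun i : Fin N => if (i : ℕ) < (J ω : ℕ) then some (Y₁ i ω) else none)) := step1.symm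
end RBC
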